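/- A connected graph is 1-edge bottlenecked if and only if it contains no cycle (i.e., it is a tree, in the sense of acyclic connected graph). -/

import Mathlib

open SimpleGraph

variable {V : Type}

/-- A set of vertices is connected if the induced subgraph is connected. -/
def ConnSet (G : SimpleGraph V) (X : Set V) : Prop := (G.induce X).Connected

/-- `G` is `n`-edge bottlenecked: any two disjoint connected vertex sets `X,Y`
admit a set of at most `n` edges meeting every `X,Y` path. -/
def EdgeBottlenecked (G : SimpleGraph V) (n : ℕ) : Prop :=
  ∀ X Y : Set V, Disjoint X Y → ConnSet G X → ConnSet G Y →
    ∃ S : Finset (Sym2 V), S.card ≤ n ∧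
      ∀ ⦃x y : V⦄ (p : G.Walk x y), x ∈ X → y ∈ Y → p.IsPath → ∃ e ∈ S, e ∈ p.edges

/-- `G` is `n`-point bottlenecked: any two disjoint connected vertex sets `X,Y`
admit a set of at most `n` vertices meeting every `X,Y` path. -/
def PointBottlenecked (G : SimpleGraph V) (n : ℕ) : Prop :=
  ∀ X Y : Set V, Disjoint X Y → ConnSet G X → ConnSet G Y →
    ∃ S : Finset V, S.card ≤ n ∧
      ∀ ⦃x y : V⦄ (p : G.Walk x y), x ∈ X → y ∈ Y → p.IsPath → ∃ v ∈ S, v ∈ p.support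

/-- An `n`-ladder: two disjoint connected poles `X,Y` and `n` rungs, i.e. `X,Y`
paths that are pairwise disjoint outside of `X ∪ Y`. -/
structure Ladder (G : SimpleGraph V) (n : ℕ) where
  X : Set V
  Y : Set V
  disj : Disjoint X Y
  connX : ConnSet G X
  connY : ConnSet G Y
  a : Fin n → V
  b : Fin n → V
  ha : ∀ i, a i ∈ X
  hb : ∀ i, b i ∈ Y
  p : (i : Fin n) → G.Walk (a i) (b i)
  isPath : ∀ i, (p i).IsPath
  rungsDisj : ∀ i j, i ≠ j → ∀ v, v ∈ (p i).support → v ∈ (p j).support → v ∈ X ∪ Y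

/-- `G` contains the dipole `D_k` as a minor: equivalently, `G` contains a `k`-ladder. -/
def HasDipoleMinor (G : SimpleGraph V) (k : ℕ) : Prop := Nonempty (Ladder G k)

/-- Two vertex sets are `M`-disjoint if every pair of points (one from each) is at
graph distance at least `M`. -/
def MDisjoint (G : SimpleGraph V) (M : ℕ) (X Y : Set V) : Prop :=
  ∀ x ∈ X, ∀ y ∈ Y, M ≤ G.dist x y

/-- `G` is `M`-fat `n`-bottlenecked: any two connected `M`-disjoint sets `X,Y` admit
at most `n` vertices (outside `X ∪ Y`) whose open `M`-neighborhood meets every `X,Y` path. -/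
def FatBottlenecked (G : SimpleGraph V) (M n : ℕ) : Prop :=
  ∀ X Y : Set V, ConnSet G X → ConnSet G Y → MDisjoint G M X Y →
    ∃ S : Finset V, S.card ≤ n ∧ (∀ s ∈ S, s ∉ X ∪ Y) ∧
      ∀ ⦃x y : V⦄ (p : G.Walk x y), x ∈ X → y ∈ Y → p.IsPath →
        ∃ v ∈ p.support, ∃ s ∈ S, G.dist v s < M

/-- An `M`-fat `n`-ladder: an `n`-ladder whose poles are `M`-disjoint and whose
rungs are pairwise `M`-disjoint. -/
structure FatLadder (G : SimpleGraph V) (M n : ℕ) extends Ladder G n where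
  polesFat : MDisjoint G M X Y
  rungsFat : ∀ i j, i ≠ j → ∀ u v, u ∈ (p i).support → v ∈ (p j).support → M ≤ G.dist u v

/-- `H` is a minor of `G`: branch sets in `G` (nonempty, connected, pairwise disjoint)
realize the vertices of `H`, and every edge of `H` is realized by an edge of `G`. -/
def IsMinor {W : Type} (G : SimpleGraph V) (H : SimpleGraph W) : Prop :=
  ∃ B : W → Set V, (∀ w, (B w).Nonempty) ∧ (∀ w, ConnSet G (B w)) ∧
    (∀ w w', w ≠ w' → Disjoint (B w) (B w')) ∧
    (∀ ⦃w w'⦄, H.Adj w w' → ∃ u ∈ B w, ∃ v ∈ B w', G.Adj u v)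

/-- `H` is an `M`-fat minor of `G`: a minor whose branch sets are pairwise `M`-disjoint
except where incident (adjacent) in `H`. -/
def IsFatMinor (G : SimpleGraph V) (M : ℕ) {W : Type} (H : SimpleGraph W) : Prop :=
  ∃ B : W → Set V, (∀ w, (B w).Nonempty) ∧ (∀ w, ConnSet G (B w)) ∧
    (∀ w w', w ≠ w' → Disjoint (B w) (B w')) ∧
    (∀ w w', w ≠ w' → ¬ H.Adj w w' → MDisjoint G M (B w) (B w')) ∧
    (∀ ⦃w w'⦄, H.Adj w w' → ∃ u ∈ B w, ∃ v ∈ B w', G.Adj u v)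

lemma connSet_singleton (G : SimpleGraph V) (v : V) : (G.induce {v}).Connected := by
  have : Nonempty ({v} : Set V) := ⟨⟨v, rfl⟩⟩
  refine ⟨fun a b => ?_⟩
  have hab : a = b := Subtype.ext (a.2.trans b.2.symm)
  subst hab
  exact Reachable.refl a

lemma walk_in_set {G : SimpleGraph V} {X : Set V} (hX : (G.induce X).Connected)
    {u x : V} (hu : u ∈ X) (hx : x ∈ X) :
    ∃ w : G.Walk u x, ∀ v ∈ w.support, v ∈ X := by
  obtain ⟨q⟩ := hX.preconnected ⟨u, hu⟩ ⟨x, hx⟩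
  refine ⟨q.map ⟨Subtype.val, fun h => h⟩, ?_⟩
  intro v hv
  rw [Walk.support_map, List.mem_map] at hv
  obtain ⟨⟨w, hw⟩, _, rfl⟩ := hv
  exact hw

lemma exit_lemma {G : SimpleGraph V} {X : Set V} :
    ∀ {a b : V} (p : G.Walk a b), p.IsPath → a ∈ X → b ∉ X →
    ∃ u u', u ∈ X ∧ u' ∉ X ∧ G.Adj u u' ∧ s(u, u') ∈ p.edges ∧
      ∃ r : G.Walk u' b, s(u, u') ∉ r.edges := by
  intro a b p
  induction p with
  | nil => intro _ ha hb; exact absurd ha hb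
  | @cons a c b h q ih =>
    intro hp ha hb
    by_cases hc : c ∈ X
    · obtain ⟨u, u', h1, h2, h3, h4, r, hr⟩ := ih ((Walk.cons_isPath_iff _ _).1 hp).1 hc hb
      exact ⟨u, u', h1, h2, h3, by simp [Walk.edges_cons, h4], r, hr⟩
    · refine ⟨a, c, ha, hc, h, by simp [Walk.edges_cons], q, fun he => ?_⟩
      exact ((Walk.cons_isPath_iff _ _).1 hp).2 (Walk.fst_mem_support_of_mem_edges _ he)

/-- A connected graph is `1`-edge bottlenecked iff it contains no cycle. -/
theorem oneBottlenecked_iff_acyclic (G : SimpleGraph V) (hG : G.Connected) :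
    EdgeBottlenecked G 1 ↔ G.IsAcyclic := by
  unfold EdgeBottlenecked ConnSet
  constructor
  · intro h1 v c hc
    cases c with
    | nil => simp at hc
    | @cons _ u _ h q =>
      rw [Walk.cons_isCycle_iff] at hc
      obtain ⟨hq, hqe⟩ := hc
      have hdisj : Disjoint ({v} : Set V) ({u} : Set V) := by
        simp [Set.disjoint_singleton, h.ne]
      obtain ⟨S, hS1, hS2⟩ := h1 {v} {u} hdisj (connSet_singleton G v) (connSet_singleton G u)
      have hpath1 : (Walk.cons h Walk.nil : G.Walk v u).IsPath := by
        simp [Walk.cons_isPath_iff, h.ne]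
      obtain ⟨e1, he1, he1'⟩ := hS2 (Walk.cons h Walk.nil) rfl rfl hpath1
      obtain ⟨e2, he2, he2'⟩ := hS2 q.reverse rfl rfl hq.reverse
      have heq : e1 = e2 := Finset.card_le_one.1 hS1 _ he1 _ he2
      simp only [Walk.edges_cons, Walk.edges_nil, List.mem_singleton] at he1'
      rw [he1'] at heq
      rw [← heq, Walk.edges_reverse, List.mem_reverse] at he2'
      exact hqe he2'
  · classical
    intro hac X Y hdisj hX hY
    obtain ⟨⟨x₀, hx₀⟩⟩ := hX.nonempty
    obtain ⟨⟨y₀, hy₀⟩⟩ := hY.nonempty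
    obtain ⟨w⟩ := hG.preconnected x₀ y₀
    have hy₀X : y₀ ∉ X := fun h => Set.disjoint_left.mp hdisj h hy₀
    obtain ⟨u, u', hu, hu', hadj, _, r, hr⟩ :=
      exit_lemma w.toPath.val w.toPath.2 hx₀ hy₀X
    refine ⟨{s(u, u')}, by simp, ?_⟩
    intro x y p hx hy _
    refine ⟨s(u, u'), Finset.mem_singleton_self _, ?_⟩
    by_contra hne
    obtain ⟨wx, hwx⟩ := walk_in_set hX hu hx
    obtain ⟨wy, hwy⟩ := walk_in_set hY hy hy₀
    have hbr := isAcyclic_iff_forall_adj_isBridge.1 hac hadj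
    rw [isBridge_iff_adj_and_forall_walk_mem_edges] at hbr
    have he := hbr (wx.append (p.append (wy.append r.reverse)))
    simp only [Walk.edges_append, Walk.edges_reverse, List.mem_append, List.mem_reverse] at he
    rcases he with h | h | h | h
    · exact hu' (hwx _ (Walk.snd_mem_support_of_mem_edges _ h))
    · exact hne h
    · exact Set.disjoint_left.mp hdisj hu (hwy _ (Walk.fst_mem_support_of_mem_edges _ h))
    · exact hr h
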